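/- For positive reals α, β, η, the quantity D := sqrt(cosh²(β/2) + cosh²(α/2) + cosh²(η/2) + 2·cosh(α/2)·cosh(β/2)·cosh(η/2) − 1)/sinh(η/2) satisfies D ≥ cosh((α+β−η)/4) and D ≥ cosh((α−η)/2) and D ≥ cosh((β−η)/2), up to a uniform multiplicative constant; more precisely, there is a constant C > 0 such that for all α, β, η > 0 with η > 1, (1/C)·e^{max{(α−η)/2,(β−η)/2,(α+β−η)/4,0}} ≤ D ≤ C·e^{max{(α−η)/2,(β−η)/2,(α+β−η)/4,0}}. -/

import Mathlib

set_option maxHeartbeats 1600000 in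
theorem cosh_d_asymptotic :
    ∃ C : ℝ, 0 < C ∧ ∀ α β η : ℝ, 0 < α → 0 < β → 1 < η →
      (1 / C) * Real.exp (max (max ((α - η) / 2) ((β - η) / 2)) (max ((α + β - η) / 4) 0)) ≤
        Real.sqrt (Real.cosh (β / 2) ^ 2 + Real.cosh (α / 2) ^ 2 + Real.cosh (η / 2) ^ 2 +
          2 * Real.cosh (α / 2) * Real.cosh (β / 2) * Real.cosh (η / 2) - 1) /
          Real.sinh (η / 2) ∧
      Real.sqrt (Real.cosh (β / 2) ^ 2 + Real.cosh (α / 2) ^ 2 + Real.cosh (η / 2) ^ 2 +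
          2 * Real.cosh (α / 2) * Real.cosh (β / 2) * Real.cosh (η / 2) - 1) /
          Real.sinh (η / 2) ≤
        C * Real.exp (max (max ((α - η) / 2) ((β - η) / 2)) (max ((α + β - η) / 4) 0)) := by
  refine ⟨12, by norm_num, fun α β η hα hβ hη => ?_⟩
  have hη0 : 0 < η := by linarith
  set X := Real.exp (α / 2) with hX
  set Y := Real.exp (β / 2) with hY
  set Z := Real.exp (η / 2) with hZ
  set e1 := Real.exp ((α - η) / 2) with he1d
  set e2 := Real.exp ((β - η) / 2) with he2d
  set e3 := Real.exp ((α + β - η) / 4) with he3d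
  have hXp : 0 < X := Real.exp_pos _
  have hYp : 0 < Y := Real.exp_pos _
  have hZp : 0 < Z := Real.exp_pos _
  have he1p : 0 < e1 := Real.exp_pos _
  have he2p : 0 < e2 := Real.exp_pos _
  have he3p : 0 < e3 := Real.exp_pos _
  have he1 : e1 * Z = X := by
    rw [he1d, hZ, hX, ← Real.exp_add]; ring_nf
  have he2 : e2 * Z = Y := by
    rw [he2d, hZ, hY, ← Real.exp_add]; ring_nf
  have he3 : e3 ^ 2 * Z = X * Y := by
    rw [he3d, hZ, hX, hY, sq, ← Real.exp_add, ← Real.exp_add, ← Real.exp_add]; ring_nf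
  -- cosh and sinh bounds
  have hca1 : X / 2 ≤ Real.cosh (α / 2) := by
    rw [Real.cosh_eq]; have := Real.exp_pos (-(α / 2)); linarith
  have hca2 : Real.cosh (α / 2) ≤ X := by
    rw [Real.cosh_eq]
    have h1 : Real.exp (-(α / 2)) ≤ 1 := Real.exp_le_one_iff.2 (by linarith)
    have h2 : (1:ℝ) ≤ X := Real.one_le_exp (by linarith)
    linarith
  have hcb1 : Y / 2 ≤ Real.cosh (β / 2) := by
    rw [Real.cosh_eq]; have := Real.exp_pos (-(β / 2)); linarith
  have hcb2 : Real.cosh (β / 2) ≤ Y := by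
    rw [Real.cosh_eq]
    have h1 : Real.exp (-(β / 2)) ≤ 1 := Real.exp_le_one_iff.2 (by linarith)
    have h2 : (1:ℝ) ≤ Y := Real.one_le_exp (by linarith)
    linarith
  have hch1 : Z / 2 ≤ Real.cosh (η / 2) := by
    rw [Real.cosh_eq]; have := Real.exp_pos (-(η / 2)); linarith
  have hch2 : Real.cosh (η / 2) ≤ Z := by
    rw [Real.cosh_eq]
    have h1 : Real.exp (-(η / 2)) ≤ 1 := Real.exp_le_one_iff.2 (by linarith)
    have h2 : (1:ℝ) ≤ Z := Real.one_le_exp (by linarith)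
    linarith
  have hZ2 : 2 < Z ^ 2 := by
    have : Z ^ 2 = Real.exp η := by rw [hZ, sq, ← Real.exp_add]; ring_nf
    rw [this]
    have h1 : Real.exp 1 < Real.exp η := Real.exp_lt_exp.2 hη
    have h2 : (2.7182818283:ℝ) < Real.exp 1 := Real.exp_one_gt_d9
    linarith
  have hs0 : 0 < Real.sinh (η / 2) := by
    rw [Real.sinh_eq]
    have : Real.exp (-(η / 2)) < Real.exp (η / 2) := Real.exp_lt_exp.2 (by linarith)
    linarith
  have hs1 : Real.sinh (η / 2) ≤ Z / 2 := by
    rw [Real.sinh_eq]; have := Real.exp_pos (-(η / 2)); linarith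
  have hs2 : Z / 4 ≤ Real.sinh (η / 2) := by
    rw [Real.sinh_eq]
    have hinv : Real.exp (-(η / 2)) * Z = 1 := by rw [hZ, ← Real.exp_add]; simp
    have : Real.exp (-(η / 2)) ≤ Z / 2 := by
      rw [← mul_le_mul_iff_of_pos_right hZp, hinv]
      linarith
    linarith
  set S := Real.cosh (β / 2) ^ 2 + Real.cosh (α / 2) ^ 2 + Real.cosh (η / 2) ^ 2 +
      2 * Real.cosh (α / 2) * Real.cosh (β / 2) * Real.cosh (η / 2) - 1 with hSdef
  have h1a : 1 ≤ Real.cosh (α / 2) := Real.one_le_cosh _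
  have h1b : 1 ≤ Real.cosh (β / 2) := Real.one_le_cosh _
  have h1h : 1 ≤ Real.cosh (η / 2) := Real.one_le_cosh _
  clear_value X Y Z e1 e2 e3
  have hca0 : (0:ℝ) ≤ Real.cosh (α / 2) := by linarith
  have hcb0 : (0:ℝ) ≤ Real.cosh (β / 2) := by linarith
  have hch0 : (0:ℝ) ≤ Real.cosh (η / 2) := by linarith
  have hprod : 0 ≤ 2 * Real.cosh (α / 2) * Real.cosh (β / 2) * Real.cosh (η / 2) := by positivity
  have hsq_a : 1 ≤ Real.cosh (α / 2) ^ 2 := one_le_pow₀ h1a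
  have hsq_b : 1 ≤ Real.cosh (β / 2) ^ 2 := one_le_pow₀ h1b
  have hsq_h : 1 ≤ Real.cosh (η / 2) ^ 2 := one_le_pow₀ h1h
  have hSX : (X / 2) ^ 2 ≤ S := by
    have := pow_le_pow_left₀ (show (0:ℝ) ≤ X / 2 by linarith) hca1 2
    rw [hSdef]; linarith
  have hSY : (Y / 2) ^ 2 ≤ S := by
    have := pow_le_pow_left₀ (show (0:ℝ) ≤ Y / 2 by linarith) hcb1 2
    rw [hSdef]; linarith
  have hSZ : (Z / 2) ^ 2 ≤ S := by
    have := pow_le_pow_left₀ (show (0:ℝ) ≤ Z / 2 by linarith) hch1 2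
    rw [hSdef]; linarith
  have hSXYZ : X * Y * Z / 4 ≤ S := by
    have p1 : X / 2 * (Y / 2) ≤ Real.cosh (α / 2) * Real.cosh (β / 2) :=
      mul_le_mul hca1 hcb1 (by linarith) hca0
    have p2 : X / 2 * (Y / 2) * (Z / 2) ≤
        Real.cosh (α / 2) * Real.cosh (β / 2) * Real.cosh (η / 2) :=
      mul_le_mul p1 hch1 (by linarith) (mul_nonneg hca0 hcb0)
    rw [hSdef]; linarith
  have hS0 : 0 ≤ S := le_trans (sq_nonneg _) hSX
  have hsqX : X / 2 ≤ Real.sqrt S := Real.le_sqrt_of_sq_le hSX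
  have hsqY : Y / 2 ≤ Real.sqrt S := Real.le_sqrt_of_sq_le hSY
  have hsqZ : Z / 2 ≤ Real.sqrt S := Real.le_sqrt_of_sq_le hSZ
  have hsq0 : 0 ≤ Real.sqrt S := Real.sqrt_nonneg _
  clear_value S
  set E := max (max ((α - η) / 2) ((β - η) / 2)) (max ((α + β - η) / 4) 0) with hEdef
  clear_value E
  have hexpE : Real.exp E = max (max e1 e2) (max e3 1) := by
    rw [hEdef, Real.exp_monotone.map_max, Real.exp_monotone.map_max,
      Real.exp_monotone.map_max, Real.exp_zero, ← he1d, ← he2d, ← he3d]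
  constructor
  · -- lower bound
    rw [hexpE, le_div_iff₀ hs0]
    have k1 : e1 * Real.sinh (η / 2) ≤ Real.sqrt S := by
      have : e1 * Real.sinh (η / 2) ≤ e1 * (Z / 2) :=
        mul_le_mul_of_nonneg_left hs1 he1p.le
      have h2 : e1 * (Z / 2) = X / 2 := by rw [← he1]; ring
      linarith
    have k2 : e2 * Real.sinh (η / 2) ≤ Real.sqrt S := by
      have : e2 * Real.sinh (η / 2) ≤ e2 * (Z / 2) :=
        mul_le_mul_of_nonneg_left hs1 he2p.le
      have h2 : e2 * (Z / 2) = Y / 2 := by rw [← he2]; ring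
      linarith
    have k3 : e3 * Real.sinh (η / 2) ≤ Real.sqrt S := by
      have h1 : e3 * Real.sinh (η / 2) ≤ e3 * (Z / 2) :=
        mul_le_mul_of_nonneg_left hs1 he3p.le
      have h2 : (e3 * (Z / 2)) ^ 2 ≤ S := by
        have : (e3 * (Z / 2)) ^ 2 = X * Y * Z / 4 := by
          rw [← he3]; ring
        linarith
      have h3 : e3 * (Z / 2) ≤ Real.sqrt S := Real.le_sqrt_of_sq_le h2
      linarith
    have k4 : 1 * Real.sinh (η / 2) ≤ Real.sqrt S := by
      rw [one_mul]; linarith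
    have hmax : max (max e1 e2) (max e3 1) * Real.sinh (η / 2) ≤ Real.sqrt S := by
      rcases max_cases (max e1 e2) (max e3 1) with ⟨h, _⟩ | ⟨h, _⟩ <;> rw [h] <;>
        [rcases max_cases e1 e2 with ⟨h', _⟩ | ⟨h', _⟩; rcases max_cases e3 1 with ⟨h', _⟩ | ⟨h', _⟩] <;>
        rw [h'] <;> assumption
    have hpos : 0 ≤ max (max e1 e2) (max e3 1) * Real.sinh (η / 2) :=
      mul_nonneg (le_trans zero_le_one (le_max_of_le_right (le_max_right _ _))) hs0.le
    linarith
  · -- upper bound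
    rw [hexpE]
    set M := max (max e1 e2) (max e3 1) with hM
    have hMe1 : e1 ≤ M := le_max_of_le_left (le_max_left _ _)
    have hMe2 : e2 ≤ M := le_max_of_le_left (le_max_right _ _)
    have hMe3 : e3 ≤ M := le_max_of_le_right (le_max_left _ _)
    have hM1 : 1 ≤ M := le_max_of_le_right (le_max_right _ _)
    have hM0 : 0 < M := lt_of_lt_of_le one_pos hM1
    have hXM : X ≤ M * Z := by
      calc X = e1 * Z := he1.symm
      _ ≤ M * Z := mul_le_mul_of_nonneg_right hMe1 hZp.le
    have hYM : Y ≤ M * Z := by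
      calc Y = e2 * Z := he2.symm
      _ ≤ M * Z := mul_le_mul_of_nonneg_right hMe2 hZp.le
    have hXYM : X * Y ≤ M ^ 2 * Z := by
      calc X * Y = e3 ^ 2 * Z := he3.symm
      _ ≤ M ^ 2 * Z :=
        mul_le_mul_of_nonneg_right (pow_le_pow_left₀ he3p.le hMe3 2) hZp.le
    have hZM : Z ≤ M * Z := le_mul_of_one_le_left hZp.le hM1
    have hSup : S ≤ (3 * (M * Z)) ^ 2 := by
      have r1 : Real.cosh (α / 2) ^ 2 ≤ (M * Z) ^ 2 :=
        pow_le_pow_left₀ hca0 (hca2.trans hXM) 2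
      have r2 : Real.cosh (β / 2) ^ 2 ≤ (M * Z) ^ 2 :=
        pow_le_pow_left₀ hcb0 (hcb2.trans hYM) 2
      have r3 : Real.cosh (η / 2) ^ 2 ≤ (M * Z) ^ 2 :=
        pow_le_pow_left₀ hch0 (hch2.trans hZM) 2
      have r4 : Real.cosh (α / 2) * Real.cosh (β / 2) ≤ X * Y :=
        mul_le_mul hca2 hcb2 hcb0 hXp.le
      have r5 : Real.cosh (α / 2) * Real.cosh (β / 2) * Real.cosh (η / 2) ≤ X * Y * Z :=
        mul_le_mul r4 hch2 hch0 (by positivity)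
      have r6 : X * Y * Z ≤ M ^ 2 * Z * Z :=
        mul_le_mul_of_nonneg_right hXYM hZp.le
      rw [hSdef]
      have r7 : 2 * (Real.cosh (α / 2) * Real.cosh (β / 2) * Real.cosh (η / 2)) ≤
          2 * (M ^ 2 * Z * Z) := by linarith
      have r8 : (3 * (M * Z)) ^ 2 = 9 * (M * Z) ^ 2 := by ring
      have r9 : M ^ 2 * Z * Z = (M * Z) ^ 2 := by ring
      linarith [sq_nonneg (M * Z)]
    have hsqS : Real.sqrt S ≤ 3 * (M * Z) := by
      have := Real.sqrt_le_sqrt hSup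
      rwa [Real.sqrt_sq (by positivity)] at this
    have hfinal : Real.sqrt S / Real.sinh (η / 2) ≤ 3 * (M * Z) / (Z / 4) :=
      div_le_div₀ (by positivity) hsqS (by positivity) hs2
    have heq : 3 * (M * Z) / (Z / 4) = 12 * M := by
      field_simp
      ring
    linarith [heq ▸ hfinal]
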